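/- Let 𝓕 be a family of holomorphic functions omitting 0 and 1 on a domain Ω ⊆ ℂⁿ, and let 𝓖 = {(f − a)/(f − b) : f ∈ 𝓕} where a, b : Ω → ℂ are holomorphic with a(z) ≠ b(z) on Ω and each f ∈ 𝓕 omits a(z) and b(z) pointwise. If 𝓖 is a normal family on Ω, then 𝓕 is a normal family on Ω. -/

import Mathlib

open Filter Topology

abbrev Cn (n : ℕ) := EuclideanSpace ℂ (Fin n)

/-- Chordal (spherical) distance between two finite points of the Riemann sphere. -/
noncomputable def chordal (a b : ℂ) : ℝ :=
  dist a b / (Real.sqrt (1 + ‖a‖^2) * Real.sqrt (1 + ‖b‖^2))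

/-- Chordal distance between a finite point and ∞. -/
noncomputable def chordalInf (a : ℂ) : ℝ := 1 / Real.sqrt (1 + ‖a‖^2)

/-- Spherical derivative of a holomorphic function of several complex variables. -/
noncomputable def sphDeriv {E : Type} [NormedAddCommGroup E] [NormedSpace ℂ E]
    (f : E → ℂ) (z : E) : ℝ := ‖fderiv ℂ f z‖ / (1 + ‖f z‖^2)

/-- A family `F` of (holomorphic) functions is normal on `Ω`: every sequence from `F`
has a subsequence which converges uniformly on compact subsets of `Ω` in the spherical
metric, either to a holomorphic function or to ∞. -/
def IsNormalFamily {E : Type} [NormedAddCommGroup E] [NormedSpace ℂ E]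
    (Ω : Set E) (F : Set (E → ℂ)) : Prop :=
  ∀ s : ℕ → E → ℂ, (∀ j, s j ∈ F) →
    ∃ φ : ℕ → ℕ, StrictMono φ ∧
      ((∃ g : E → ℂ, DifferentiableOn ℂ g Ω ∧
          ∀ K, K ⊆ Ω → IsCompact K → ∀ ε > 0, ∃ N, ∀ j ≥ N, ∀ z ∈ K,
            chordal (s (φ j) z) (g z) < ε) ∨
        (∀ K, K ⊆ Ω → IsCompact K → ∀ M : ℝ, ∃ N, ∀ j ≥ N, ∀ z ∈ K, M < ‖s (φ j) z‖))

lemma one_le_sqrt_aux (r : ℝ) : 1 ≤ Real.sqrt (1 + r^2) := by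
  nlinarith [Real.sq_sqrt (show (0:ℝ) ≤ 1 + r^2 by positivity), Real.sqrt_nonneg (1+r^2)]

lemma sqrt_le_aux (r : ℝ) (hr : 0 ≤ r) : Real.sqrt (1 + r^2) ≤ 1 + r := by
  rw [show (1:ℝ)+r = Real.sqrt ((1+r)^2) by rw [Real.sqrt_sq (by linarith)]]
  exact Real.sqrt_le_sqrt (by nlinarith)

lemma chordal_nonneg' (x y : ℂ) : 0 ≤ chordal x y := by
  unfold chordal
  have := one_le_sqrt_aux ‖x‖; have := one_le_sqrt_aux ‖y‖
  positivity

lemma chordal_le_dist (x y : ℂ) : chordal x y ≤ dist x y := by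
  have hx := one_le_sqrt_aux ‖x‖
  have hy := one_le_sqrt_aux ‖y‖
  unfold chordal
  apply div_le_self dist_nonneg
  nlinarith

lemma dist_le_chordal_mul {x y : ℂ} {M : ℝ} (hM : 0 ≤ M) (hy : ‖y‖ ≤ M)
    (h : chordal x y < 1/(2*(1+M))) : dist x y ≤ chordal x y * ((2*M+2)*(M+1)) := by
  have hx1 := one_le_sqrt_aux ‖x‖
  have hy1 := one_le_sqrt_aux ‖y‖
  have hx2 := sqrt_le_aux ‖x‖ (norm_nonneg x)
  have hy2 := sqrt_le_aux ‖y‖ (norm_nonneg y)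
  have hc : 0 ≤ chordal x y := chordal_nonneg' x y
  have hne : Real.sqrt (1+‖x‖^2) * Real.sqrt (1+‖y‖^2) ≠ 0 := by nlinarith
  have heq : dist x y = chordal x y * (Real.sqrt (1+‖x‖^2) * Real.sqrt (1+‖y‖^2)) := by
    unfold chordal; rw [div_mul_cancel₀ _ hne]
  have hsy : Real.sqrt (1+‖y‖^2) ≤ 1 + M := by linarith
  have hstep1 : dist x y ≤ chordal x y * ((1+‖x‖)*(1+M)) := by
    rw [heq]
    refine mul_le_mul_of_nonneg_left ?_ hc
    exact mul_le_mul hx2 hsy (by positivity) (by positivity)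
  have hxb : ‖x‖ ≤ 2*M+1 := by
    have hd : ‖x‖ - ‖y‖ ≤ dist x y := by
      rw [dist_eq_norm]; exact norm_sub_norm_le x y
    have h2 : chordal x y * ((1+‖x‖)*(1+M)) < (1/(2*(1+M))) * ((1+‖x‖)*(1+M)) :=
      mul_lt_mul_of_pos_right h (by positivity)
    have h3 : (1/(2*(1+M))) * ((1+‖x‖)*(1+M)) = (1+‖x‖)/2 := by
      field_simp
    nlinarith [norm_nonneg x, norm_nonneg y]
  have hfin : (1+‖x‖)*(1+M) ≤ (2*M+2)*(M+1) := by nlinarith [norm_nonneg x]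
  calc dist x y ≤ chordal x y * ((1+‖x‖)*(1+M)) := hstep1
    _ ≤ chordal x y * ((2*M+2)*(M+1)) := mul_le_mul_of_nonneg_left hfin hc

set_option maxHeartbeats 2000000 in
theorem stmt10 {n : ℕ} {Ω : Set (Cn n)} (hΩ : IsOpen Ω) (hconn : IsConnected Ω)
    (F : Set (Cn n → ℂ)) (hhol : ∀ f ∈ F, DifferentiableOn ℂ f Ω)
    (h01 : ∀ f ∈ F, ∀ z ∈ Ω, f z ≠ 0 ∧ f z ≠ 1)
    (a b : Cn n → ℂ) (ha : DifferentiableOn ℂ a Ω) (hb : DifferentiableOn ℂ b Ω)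
    (hab : ∀ z ∈ Ω, a z ≠ b z)
    (hom : ∀ f ∈ F, ∀ z ∈ Ω, f z ≠ a z ∧ f z ≠ b z)
    (hG : IsNormalFamily Ω ((fun f => fun z => (f z - a z) / (f z - b z)) '' F)) :
    IsNormalFamily Ω F := by
  intro s hs
  set t : ℕ → Cn n → ℂ := fun j z => (s j z - a z) / (s j z - b z) with ht
  have htmem : ∀ j, t j ∈ ((fun f => fun z => (f z - a z) / (f z - b z)) '' F) :=
    fun j => ⟨s j, hs j, rfl⟩
  obtain ⟨φ, hφ, hcase⟩ := hG t htmem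
  have hsb : ∀ j, ∀ z ∈ Ω, s j z - b z ≠ 0 :=
    fun j z hz => sub_ne_zero.2 (hom _ (hs j) z hz).2
  have hba : ∀ z ∈ Ω, b z - a z ≠ 0 :=
    fun z hz => sub_ne_zero.2 fun e => hab z hz e.symm
  have hkey : ∀ j, ∀ z ∈ Ω, t j z - 1 = (b z - a z) / (s j z - b z) := by
    intro j z hz
    field_simp [ht, hsb j z hz]
    simp only [ht]
    field_simp [hsb j z hz]
    ring
  have htne1 : ∀ j, ∀ z ∈ Ω, t j z ≠ 1 := by
    intro j z hz h1
    have hk := hkey j z hz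
    rw [h1, sub_self] at hk
    exact div_ne_zero (hba z hz) (hsb j z hz) hk.symm
  have hsb_eq : ∀ j, ∀ z ∈ Ω, s j z - b z = (b z - a z) / (t j z - 1) := by
    intro j z hz
    rw [eq_div_iff (sub_ne_zero.2 (htne1 j z hz)), hkey j z hz,
      mul_div_cancel₀ _ (hsb j z hz)]
  refine ⟨φ, hφ, ?_⟩
  rcases hcase with ⟨h, hdh, hA⟩ | hB
  · -- chordal convergence of t∘φ to holomorphic h
    -- upgrade to locally uniform Euclidean convergence
    have hconv : ∀ K, K ⊆ Ω → IsCompact K → ∀ ε > 0, ∃ N, ∀ j ≥ N, ∀ z ∈ K,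
        dist (t (φ j) z) (h z) < ε := by
      intro K hK hKc ε hε
      obtain ⟨M0, hM0⟩ := hKc.exists_bound_of_continuousOn (hdh.continuousOn.mono hK)
      set M := max M0 0 with hM
      have hMnn : (0:ℝ) ≤ M := le_max_right _ _
      have hbound : ∀ z ∈ K, ‖h z‖ ≤ M := fun z hz => (hM0 z hz).trans (le_max_left _ _)
      have hD : (0:ℝ) < (2*M+2)*(M+1) := by positivity
      obtain ⟨N, hN⟩ := hA K hK hKc (min (1/(2*(1+M))) (ε/((2*M+2)*(M+1))))
        (lt_min (by positivity) (by positivity))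
      refine ⟨N, fun j hj z hz => ?_⟩
      have h1 := hN j hj z hz
      have hd := dist_le_chordal_mul hMnn (hbound z hz)
        (lt_of_lt_of_le h1 (min_le_left _ _))
      calc dist (t (φ j) z) (h z) ≤ chordal (t (φ j) z) (h z) * ((2*M+2)*(M+1)) := hd
        _ < ε := (lt_div_iff₀ hD).1 (lt_of_lt_of_le h1 (min_le_right _ _))
    -- Hurwitz: the set where h = 1 is open
    have hopen : ∀ z₀ ∈ Ω, h z₀ = 1 → ∃ r > 0, Metric.ball z₀ r ⊆ Ω ∧
        ∀ w ∈ Metric.ball z₀ r, h w = 1 := by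
      intro z₀ hz₀Ω hz₀1
      obtain ⟨r₀, hr₀pos, hr₀⟩ := Metric.isOpen_iff.1 hΩ z₀ hz₀Ω
      refine ⟨r₀/4, by positivity, fun w hw =>
        hr₀ (Metric.ball_subset_ball (by linarith) hw), ?_⟩
      by_contra hcon
      push_neg at hcon
      obtain ⟨w, hwball, hwne⟩ := hcon
      set L : ℂ → Cn n := fun τ => z₀ + τ • (w - z₀) with hLdef
      have hd : (0:ℝ) < ‖w - z₀‖ := by
        rw [norm_pos_iff, sub_ne_zero]
        rintro rfl
        exact hwne hz₀1
      have hdlt : ‖w - z₀‖ < r₀/4 := by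
        rw [← dist_eq_norm]; exact Metric.mem_ball.1 hwball
      have hLΩ : ∀ τ : ℂ, ‖τ‖ ≤ 2 → L τ ∈ Ω := by
        intro τ hτ
        apply hr₀
        rw [Metric.mem_ball, dist_eq_norm]
        have he : L τ - z₀ = τ • (w - z₀) := by simp [hLdef]
        rw [he, norm_smul]
        have := norm_nonneg τ
        nlinarith
      have hLdiff : Differentiable ℂ L :=
        (differentiable_id.smul_const (w - z₀)).const_add z₀
      have hmaps : ∀ τ ∈ Metric.ball (0:ℂ) 2, L τ ∈ Ω :=
        fun τ hτ => hLΩ τ (le_of_lt (mem_ball_zero_iff.1 hτ))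
      set H : ℂ → ℂ := fun τ => h (L τ) - 1 with hHdef
      have HdiffBall : DifferentiableOn ℂ H (Metric.ball (0:ℂ) 2) :=
        (hdh.comp hLdiff.differentiableOn hmaps).sub (differentiableOn_const 1)
      have Hanal : AnalyticOnNhd ℂ H (Metric.ball (0:ℂ) 2) :=
        HdiffBall.analyticOnNhd Metric.isOpen_ball
      have hL0 : L 0 = z₀ := by simp [hLdef]
      have hL1 : L 1 = w := by simp [hLdef]
      have H0 : H 0 = 0 := by rw [hHdef]; simp [hL0, hz₀1]
      have H1 : H 1 ≠ 0 := by rw [hHdef]; simp [hL1]; exact sub_ne_zero.2 hwne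
      have h0mem : (0:ℂ) ∈ Metric.ball (0:ℂ) 2 := by
        rw [mem_ball_zero_iff]; simp
      have h1mem : (1:ℂ) ∈ Metric.ball (0:ℂ) 2 := by
        rw [mem_ball_zero_iff]; simp
      rcases (Hanal 0 h0mem).eventually_eq_zero_or_eventually_ne_zero with hev | hev
      · exact H1 (Hanal.eqOn_zero_of_preconnected_of_eventuallyEq_zero
          ((convex_ball (0:ℂ) 2).isPreconnected) h0mem hev h1mem)
      · rw [eventually_nhdsWithin_iff] at hev
        obtain ⟨ρ₀, hρ₀pos, hρ₀⟩ := Metric.eventually_nhds_iff.1 hev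
        set ρ := min (ρ₀/2) 1 with hρdef
        have hρpos : (0:ℝ) < ρ := lt_min (by positivity) one_pos
        have hρle1 : ρ ≤ 1 := min_le_right _ _
        have hsphere_ne : ∀ τ ∈ Metric.sphere (0:ℂ) ρ, H τ ≠ 0 := by
          intro τ hτ
          have hτn : ‖τ‖ = ρ := mem_sphere_zero_iff_norm.1 hτ
          have hτne : τ ≠ 0 := by
            intro h0; rw [h0, norm_zero] at hτn; linarith
          apply hρ₀
          · rw [dist_zero_right, hτn]
            have := min_le_left (ρ₀/2) 1
            linarith
          · simpa using hτne
        have hsc : IsCompact (Metric.sphere (0:ℂ) ρ) := isCompact_sphere 0 ρ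
        have hsne : (Metric.sphere (0:ℂ) ρ).Nonempty :=
          NormedSpace.sphere_nonempty.2 hρpos.le
        have hsub2 : Metric.sphere (0:ℂ) ρ ⊆ Metric.ball (0:ℂ) 2 := by
          intro τ hτ
          rw [mem_ball_zero_iff]
          rw [mem_sphere_zero_iff_norm] at hτ
          linarith
        have hclosedsub : Metric.closedBall (0:ℂ) ρ ⊆ Metric.ball (0:ℂ) 2 := by
          intro τ hτ
          rw [mem_ball_zero_iff]
          rw [mem_closedBall_zero_iff] at hτ
          linarith
        obtain ⟨τ₀, hτ₀, hminH⟩ := hsc.exists_isMinOn hsne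
          ((HdiffBall.continuousOn.mono hsub2).norm)
        set m := ‖H τ₀‖ with hmdef
        have hmpos : (0:ℝ) < m := norm_pos_iff.2 (hsphere_ne τ₀ hτ₀)
        set K := L '' (Metric.closedBall (0:ℂ) ρ) with hKdef
        have hKc : IsCompact K := (isCompact_closedBall _ _).image hLdiff.continuous
        have hKΩ : K ⊆ Ω := by
          rintro _ ⟨τ, hτ, rfl⟩
          exact hLΩ τ (le_trans (mem_closedBall_zero_iff.1 hτ) (by linarith))
        obtain ⟨N, hN⟩ := hconv K hKΩ hKc (m/2) (by positivity)
        set u : ℂ → ℂ := fun τ => t (φ N) (L τ) - 1 with hudef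
        have hune : ∀ τ : ℂ, ‖τ‖ ≤ 2 → u τ ≠ 0 :=
          fun τ hτ => sub_ne_zero.2 (htne1 (φ N) (L τ) (hLΩ τ hτ))
        have htdiff : DifferentiableOn ℂ (t (φ N)) Ω := by
          simp only [ht, div_eq_mul_inv]
          exact ((hhol _ (hs _)).sub ha).mul (((hhol _ (hs _)).sub hb).inv (hsb (φ N)))
        have hudiff : DifferentiableOn ℂ u (Metric.ball (0:ℂ) 2) :=
          (htdiff.comp hLdiff.differentiableOn hmaps).sub (differentiableOn_const 1)
        set v : ℂ → ℂ := fun τ => (u τ)⁻¹ with hvdef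
        have hvdiff : DifferentiableOn ℂ v (Metric.ball (0:ℂ) 2) :=
          hudiff.inv (fun τ hτ => hune τ (le_of_lt (mem_ball_zero_iff.1 hτ)))
        have hvcl : DiffContOnCl ℂ v (Metric.ball (0:ℂ) ρ) := by
          apply DifferentiableOn.diffContOnCl
          apply hvdiff.mono
          rw [closure_ball (0:ℂ) hρpos.ne']
          exact hclosedsub
        have hfront : ∀ τ ∈ frontier (Metric.ball (0:ℂ) ρ), ‖v τ‖ ≤ 2/m := by
          rw [frontier_ball (0:ℂ) hρpos.ne']
          intro τ hτ
          have hτρ : ‖τ‖ = ρ := mem_sphere_zero_iff_norm.1 hτ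
          have hLK : L τ ∈ K := ⟨τ, by rw [mem_closedBall_zero_iff, hτρ], rfl⟩
          have hcl := hN N (le_refl N) (L τ) hLK
          rw [Complex.dist_eq] at hcl
          have hHτ : m ≤ ‖H τ‖ := hminH hτ
          have hub : m/2 ≤ ‖u τ‖ := by
            have he : H τ - u τ = h (L τ) - t (φ N) (L τ) := by
              rw [hHdef, hudef]; ring
            have h2 : ‖H τ - u τ‖ < m/2 := by
              rw [he, norm_sub_rev]; exact hcl
            have h3 := norm_sub_norm_le (H τ) (H τ - u τ)
            simp only [sub_sub_cancel] at h3
            linarith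
          have : ‖v τ‖ = ‖u τ‖⁻¹ := by rw [hvdef, norm_inv]
          rw [this]
          have h4 : ‖u τ‖⁻¹ ≤ (m/2)⁻¹ :=
            inv_anti₀ (by positivity) hub
          rw [inv_div] at h4
          exact h4
        have hmax : ‖v 0‖ ≤ 2/m :=
          Complex.norm_le_of_forall_mem_frontier_norm_le Metric.isBounded_ball hvcl hfront
            (by rw [closure_ball (0:ℂ) hρpos.ne']
                exact Metric.mem_closedBall_self hρpos.le)
        have h0K : L 0 ∈ K := ⟨0, by simp [hρpos.le], rfl⟩
        have hcl0 := hN N (le_refl N) (L 0) h0K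
        rw [Complex.dist_eq] at hcl0
        have hu0 : ‖u 0‖ < m/2 := by
          have he : h (L 0) = 1 := by rw [hL0, hz₀1]
          have : u 0 = t (φ N) (L 0) - h (L 0) := by rw [hudef, he]
          rw [this]
          exact hcl0
        have hu0ne : u 0 ≠ 0 := hune 0 (by simp)
        have hu0pos : (0:ℝ) < ‖u 0‖ := norm_pos_iff.2 hu0ne
        have hv0 : ‖v 0‖ = ‖u 0‖⁻¹ := by rw [hvdef, norm_inv]
        rw [hv0] at hmax
        have hge : m/2 ≤ ‖u 0‖ := by
          have hinv : ‖u 0‖⁻¹ * ‖u 0‖ = 1 := inv_mul_cancel₀ hu0pos.ne'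
          have hstep := mul_le_mul_of_nonneg_right hmax hu0pos.le
          rw [hinv] at hstep
          have hdiv2 : m * (2/m) = 2 := by field_simp
          nlinarith [mul_le_mul_of_nonneg_left hstep hmpos.le]
        linarith
    by_cases hall : ∀ z ∈ Ω, h z ≠ 1
    · -- limit function g
      left
      have hgdiff : DifferentiableOn ℂ (fun z => b z + (b z - a z) / (h z - 1)) Ω := by
        apply DifferentiableOn.add hb
        simp only [div_eq_mul_inv]
        exact (hb.sub ha).mul ((hdh.sub (differentiableOn_const (1:ℂ))).inv
          (fun z hz => sub_ne_zero.2 (hall z hz)))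
      refine ⟨fun z => b z + (b z - a z) / (h z - 1), hgdiff, ?_⟩
      intro K hK hKc ε hε
      -- positive lower bound on ‖h z - 1‖
      obtain ⟨δ, hδpos, hδ⟩ : ∃ δ > 0, ∀ z ∈ K, δ ≤ ‖h z - 1‖ := by
        rcases K.eq_empty_or_nonempty with rfl | hne
        · exact ⟨1, one_pos, by simp⟩
        · obtain ⟨z₀, hz₀, hmin⟩ := hKc.exists_isMinOn hne
            (((hdh.continuousOn.mono hK).sub continuousOn_const).norm)
          exact ⟨‖h z₀ - 1‖, norm_pos_iff.2 (sub_ne_zero.2 (hall z₀ (hK hz₀))),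
            fun z hz => hmin hz⟩
      obtain ⟨C0, hC0⟩ := hKc.exists_bound_of_continuousOn
        ((hb.continuousOn.sub ha.continuousOn).mono hK)
      set C := max C0 0 + 1 with hC
      have hCpos : (0:ℝ) < C := by positivity
      have hCb : ∀ z ∈ K, ‖b z - a z‖ ≤ C := fun z hz =>
        (hC0 z hz).trans (by simp [hC]; nlinarith [le_max_left C0 (0:ℝ)])
      obtain ⟨N, hN⟩ := hconv K hK hKc (min (δ/2) (ε*(δ/2)*δ/C))
        (lt_min (by positivity) (by positivity))
      refine ⟨N, fun j hj z hz => ?_⟩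
      have hzΩ := hK hz
      have hclose := hN j hj z hz
      rw [Complex.dist_eq] at hclose
      have hu1 : t (φ j) z - 1 ≠ 0 := sub_ne_zero.2 (htne1 (φ j) z hzΩ)
      have hh1 : h z - 1 ≠ 0 := sub_ne_zero.2 (hall z hzΩ)
      have hlow : δ/2 ≤ ‖t (φ j) z - 1‖ := by
        have h1 : ‖t (φ j) z - h z‖ < δ/2 := lt_of_lt_of_le hclose (min_le_left _ _)
        have h2 := hδ z hz
        have h3 : ‖h z - 1‖ - ‖t (φ j) z - h z‖ ≤ ‖t (φ j) z - 1‖ := by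
          have := norm_sub_norm_le (h z - 1) (h z - t (φ j) z)
          simp only [sub_sub_sub_cancel_left] at this
          rw [norm_sub_rev (h z) (t (φ j) z)] at this
          linarith [this]
        linarith
      -- formula for the difference
      have e2 : s (φ j) z - (b z + (b z - a z) / (h z - 1)) =
          (b z - a z) * (h z - t (φ j) z) / ((t (φ j) z - 1) * (h z - 1)) := by
        have e1 : s (φ j) z = b z + (b z - a z) / (t (φ j) z - 1) := by
          have := hsb_eq (φ j) z hzΩ
          linear_combination this
        rw [e1]
        field_simp
        ring
      have hnorm : ‖s (φ j) z - (b z + (b z - a z) / (h z - 1))‖ < ε := by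
        rw [e2, norm_div, norm_mul, norm_mul]
        rw [div_lt_iff₀ (mul_pos (norm_pos_iff.2 hu1) (norm_pos_iff.2 hh1))]
        have hnum : ‖b z - a z‖ * ‖h z - t (φ j) z‖ < C * (ε*(δ/2)*δ/C) := by
          have h1 : ‖h z - t (φ j) z‖ < ε*(δ/2)*δ/C := by
            rw [norm_sub_rev]
            exact lt_of_lt_of_le hclose (min_le_right _ _)
          have h2 := hCb z hz
          have h3 : (0:ℝ) ≤ ‖h z - t (φ j) z‖ := norm_nonneg _
          nlinarith [norm_nonneg (b z - a z)]
        have hCc : C * (ε*(δ/2)*δ/C) = ε*(δ/2)*δ := by field_simp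
        have hden : ε*(δ/2)*δ ≤ ε * (‖t (φ j) z - 1‖ * ‖h z - 1‖) := by
          have hmm : (δ/2)*δ ≤ ‖t (φ j) z - 1‖ * ‖h z - 1‖ :=
            mul_le_mul hlow (hδ z hz) (by linarith) (norm_nonneg _)
          calc ε*(δ/2)*δ = ε*((δ/2)*δ) := by ring
            _ ≤ ε * (‖t (φ j) z - 1‖ * ‖h z - 1‖) := mul_le_mul_of_nonneg_left hmm hε.le
        calc ‖b z - a z‖ * ‖h z - t (φ j) z‖ < C * (ε*(δ/2)*δ/C) := hnum
          _ = ε*(δ/2)*δ := hCc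
          _ ≤ ε * (‖t (φ j) z - 1‖ * ‖h z - 1‖) := hden
      calc chordal (s (φ j) z) (b z + (b z - a z) / (h z - 1))
          ≤ dist (s (φ j) z) (b z + (b z - a z) / (h z - 1)) := chordal_le_dist _ _
        _ < ε := by rw [Complex.dist_eq]; exact hnorm
    · -- h ≡ 1 on Ω, so s∘φ → ∞
      push_neg at hall
      obtain ⟨z₁, hz₁Ω, hz₁⟩ := hall
      have hone : ∀ z ∈ Ω, h z = 1 := by
        set S : Set (Cn n) := {z | z ∈ Ω ∧ h z = 1} with hS
        set T : Set (Cn n) := Ω ∩ h ⁻¹' {(1:ℂ)}ᶜ with hT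
        have hSopen : IsOpen S := by
          rw [Metric.isOpen_iff]
          rintro z ⟨hzΩ, hz1⟩
          obtain ⟨r, hr, hrΩ, hr1⟩ := hopen z hzΩ hz1
          exact ⟨r, hr, fun w hw => ⟨hrΩ hw, hr1 w hw⟩⟩
        have hTopen : IsOpen T :=
          hdh.continuousOn.isOpen_inter_preimage hΩ isOpen_compl_singleton
        by_contra hcon
        push_neg at hcon
        obtain ⟨z₂, hz₂Ω, hz₂⟩ := hcon
        have := hconn.isPreconnected S T hSopen hTopen
          (fun z hz => by
            by_cases h1 : h z = 1
            · exact Or.inl ⟨hz, h1⟩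
            · exact Or.inr ⟨hz, h1⟩)
          ⟨z₁, hz₁Ω, hz₁Ω, hz₁⟩ ⟨z₂, hz₂Ω, hz₂Ω, hz₂⟩
        obtain ⟨z₃, _, ⟨_, h3⟩, ⟨_, h4⟩⟩ := this
        exact h4 h3
      right
      intro K hK hKc M
      obtain ⟨c, hcpos, hc⟩ : ∃ c > 0, ∀ z ∈ K, c ≤ ‖b z - a z‖ := by
        rcases K.eq_empty_or_nonempty with rfl | hne
        · exact ⟨1, one_pos, by simp⟩
        · obtain ⟨z₀, hz₀, hmin⟩ := hKc.exists_isMinOn hne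
            (((hb.continuousOn.sub ha.continuousOn).mono hK).norm)
          exact ⟨‖b z₀ - a z₀‖, norm_pos_iff.2 (hba z₀ (hK hz₀)), fun z hz => hmin hz⟩
      obtain ⟨B0, hB0⟩ := hKc.exists_bound_of_continuousOn (hb.continuousOn.mono hK)
      set B := max B0 0 with hB
      have hBnn : (0:ℝ) ≤ B := le_max_right _ _
      have hBb : ∀ z ∈ K, ‖b z‖ ≤ B := fun z hz => (hB0 z hz).trans (le_max_left _ _)
      set M' := max M 0 with hM'
      obtain ⟨N, hN⟩ := hconv K hK hKc (c/(M' + B + 1))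
        (by positivity)
      refine ⟨N, fun j hj z hz => ?_⟩
      have hzΩ := hK hz
      have hclose := hN j hj z hz
      rw [Complex.dist_eq, hone z hzΩ] at hclose
      have hu1 : t (φ j) z - 1 ≠ 0 := sub_ne_zero.2 (htne1 (φ j) z hzΩ)
      have hupos : (0:ℝ) < ‖t (φ j) z - 1‖ := norm_pos_iff.2 hu1
      have hsbig : M' + B + 1 ≤ ‖s (φ j) z - b z‖ := by
        have := hsb_eq (φ j) z hzΩ
        rw [this, norm_div]
        rw [le_div_iff₀ hupos]
        have h1 : ‖t (φ j) z - 1‖ < c/(M' + B + 1) := hclose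
        have h2 := hc z hz
        have hMB : (0:ℝ) < M' + B + 1 := by positivity
        have h4 : (M' + B + 1) * (c/(M' + B + 1)) = c := by field_simp
        nlinarith [mul_lt_mul_of_pos_left h1 hMB]
      have : M' < ‖s (φ j) z‖ := by
        have := norm_sub_norm_le (s (φ j) z - b z) (- b z)
        simp only [sub_neg_eq_add, sub_add_cancel, norm_neg] at this
        have hb' := hBb z hz
        linarith
      exact lt_of_le_of_lt (le_max_left M 0) this
  · -- t∘φ → ∞ : s∘φ → b
    left
    refine ⟨b, hb, ?_⟩
    intro K hK hKc ε hε
    obtain ⟨C0, hC0⟩ := hKc.exists_bound_of_continuousOn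
      ((hb.continuousOn.sub ha.continuousOn).mono hK)
    set C := max C0 0 + 1 with hC
    have hCpos : (0:ℝ) < C := by positivity
    have hCb : ∀ z ∈ K, ‖b z - a z‖ ≤ C := fun z hz =>
      (hC0 z hz).trans (by simp [hC]; nlinarith [le_max_left C0 (0:ℝ)])
    obtain ⟨N, hN⟩ := hB K hK hKc (C/ε + 1)
    refine ⟨N, fun j hj z hz => ?_⟩
    have hzΩ := hK hz
    have hbig := hN j hj z hz
    have hu1 : t (φ j) z - 1 ≠ 0 := sub_ne_zero.2 (htne1 (φ j) z hzΩ)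
    have hularge : C/ε < ‖t (φ j) z - 1‖ := by
      have := norm_sub_norm_le (t (φ j) z) (1:ℂ)
      simp only [norm_one] at this
      linarith
    have hupos : (0:ℝ) < ‖t (φ j) z - 1‖ := lt_trans (by positivity) hularge
    have hdist : ‖s (φ j) z - b z‖ < ε := by
      rw [hsb_eq (φ j) z hzΩ, norm_div, div_lt_iff₀ hupos]
      have h2 := hCb z hz
      have h4 : ε * (C/ε) = C := by field_simp
      nlinarith [mul_lt_mul_of_pos_left hularge hε]
    calc chordal (s (φ j) z) (b z) ≤ dist (s (φ j) z) (b z) := chordal_le_dist _ _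
      _ < ε := by rw [Complex.dist_eq]; exact hdist
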